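/- For every real α and every n ∈ ℕ, the polynomial identity x² · L_{n+1}^{(α+2)}(x) = (x² − (2n+2)x − (n+1)(α+1)) · L_{n+1}^{(α)}(x) + (x + α + 1)(α + n + 1) · L_n^{(α)}(x) holds in ℝ[x]. -/
import Mathlib


open Polynomial

/-- The generalized Laguerre polynomial `L_n^{(α)}(x) =
∑_{k=0}^{n} (−1)^k [∏_{j=k+1}^{n}(α+j)] / ((n−k)!·k!) · x^k`. -/
noncomputable def laguerre (α : ℝ) (n : ℕ) : Polynomial ℝ :=
  ∑ k ∈ Finset.range (n + 1),
    Polynomial.C ((-1 : ℝ) ^ k * (∏ j ∈ Finset.Icc (k + 1) n, (α + (j : ℝ))) /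
      ((n - k).factorial * k.factorial)) * Polynomial.X ^ k

open Finset

lemma laguerre_coeff (α : ℝ) (n k : ℕ) :
    (laguerre α n).coeff k = if k ≤ n then
      (-1 : ℝ) ^ k * (∏ j ∈ Finset.Icc (k + 1) n, (α + (j : ℝ))) /
        ((n - k).factorial * k.factorial) else 0 := by
  unfold laguerre
  rw [finset_sum_coeff]
  simp only [coeff_C_mul, coeff_X_pow, mul_ite, mul_one, mul_zero]
  rw [Finset.sum_ite_eq (Finset.range (n+1))]
  simp [Finset.mem_range, Nat.lt_succ_iff]

lemma coeff_X_mul' (p : ℝ[X]) (k : ℕ) :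
    (X * p).coeff k = if 1 ≤ k then p.coeff (k - 1) else 0 := by
  rw [mul_comm, ← pow_one (X : ℝ[X]), Polynomial.coeff_mul_X_pow']

lemma prod_top (α : ℝ) {k n : ℕ} (h : k ≤ n + 1) :
    ∏ j ∈ Icc k (n+1), (α + (j : ℝ)) = (∏ j ∈ Icc k n, (α + (j : ℝ))) * (α + (n : ℝ) + 1) := by
  rw [Finset.prod_Icc_succ_top h]
  push_cast; ring

lemma prod_bot (α : ℝ) {k n : ℕ} (h : k ≤ n) :
    ∏ j ∈ Icc k n, (α + (j : ℝ)) = (α + (k : ℝ)) * ∏ j ∈ Icc (k+1) n, (α + (j : ℝ)) := by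
  rw [Finset.Icc_eq_cons_Ioc h, Finset.prod_cons, Finset.Icc_add_one_left_eq_Ioc]

lemma prod_shift (α : ℝ) (a b : ℕ) :
    ∏ j ∈ Icc (a+1) (b+1), (α + (j : ℝ)) = ∏ j ∈ Icc a b, (α + 1 + (j : ℝ)) := by
  rw [← Finset.map_add_right_Icc, Finset.prod_map]
  apply Finset.prod_congr rfl
  intro x _
  simp only [addRightEmbedding_apply]
  push_cast; ring

lemma fact_ne (m : ℕ) : ((m.factorial : ℝ)) ≠ 0 := by
  exact_mod_cast m.factorial_ne_zero

-- Lemma A : x L_n^{(α+1)} = (n+α+1) L_n^{(α)} − (n+1) L_{n+1}^{(α)}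
lemma lemA (α : ℝ) (n : ℕ) :
    X * laguerre (α+1) n =
      C ((n : ℝ) + α + 1) * laguerre α n - C ((n : ℝ) + 1) * laguerre α (n+1) := by
  ext k
  rw [coeff_X_mul', coeff_sub, coeff_C_mul, coeff_C_mul, laguerre_coeff, laguerre_coeff,
    laguerre_coeff]
  match k with
  | 0 =>
    simp only [Nat.zero_le, if_true, if_neg (by omega : ¬ 1 ≤ 0), Nat.sub_zero]
    rw [prod_top α (by omega), Nat.factorial_succ]
    push_cast
    field_simp
    ring
  | (m+1) =>
    simp only [Nat.add_sub_cancel, if_pos (by omega : 1 ≤ m + 1)]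
    by_cases h1 : m + 1 ≤ n
    · obtain ⟨d, rfl⟩ : ∃ d, n = m + 1 + d := ⟨n - (m+1), by omega⟩
      rw [if_pos (by omega), if_pos (by omega), if_pos (by omega)]
      have e1 : m + 1 + d - m = d + 1 := by omega
      have e2 : m + 1 + d - (m + 1) = d := by omega
      have e3 : m + 1 + d + 1 - (m + 1) = d + 1 := by omega
      rw [e1, e2, e3]
      rw [show (∏ j ∈ Icc (m+1) (m+1+d), ((α:ℝ) + 1 + (j:ℝ))) =
        ∏ j ∈ Icc (m+2) (m+1+d+1), (α + (j:ℝ)) from by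
          rw [show m + 2 = (m+1)+1 from rfl, prod_shift]]
      rw [prod_top α (by omega), show m + 1 + 1 = m + 2 from by omega]
      rw [Nat.factorial_succ d, Nat.factorial_succ m]
      push_cast
      field_simp
      ring
    · by_cases h2 : m = n
      · subst h2
        rw [if_pos (le_refl m), if_neg (by omega), if_pos (by omega)]
        simp only [Nat.sub_self, Nat.add_sub_cancel_left, Nat.factorial_zero]
        rw [Finset.Icc_eq_empty (by omega), Finset.Icc_eq_empty (by omega),
          Finset.prod_empty, Nat.factorial_succ]
        push_cast
        field_simp
        ring
      · rw [if_neg (by omega), if_neg (by omega), if_neg (by omega)]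
        ring

lemma lemR (α : ℝ) (n : ℕ) :
    C ((n : ℝ) + 2) * laguerre α (n+2) =
      (C (2*(n : ℝ) + 3 + α) - X) * laguerre α (n+1) - C ((n : ℝ) + 1 + α) * laguerre α n := by
  ext k
  rw [sub_mul, coeff_sub, coeff_sub, coeff_C_mul, coeff_C_mul, coeff_C_mul, coeff_X_mul',
    laguerre_coeff, laguerre_coeff, laguerre_coeff, laguerre_coeff]
  match k with
  | 0 =>
    simp only [Nat.zero_le, if_true, if_neg (by omega : ¬ 1 ≤ 0), Nat.sub_zero]
    rw [show n + 2 = (n + 1) + 1 from rfl, prod_top α (by omega), prod_top α (by omega),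
      Nat.factorial_succ (n+1), Nat.factorial_succ n]
    push_cast
    field_simp
    ring
  | (m+1) =>
    simp only [Nat.add_sub_cancel, if_pos (by omega : 1 ≤ m + 1)]
    by_cases h1 : m + 1 ≤ n
    · obtain ⟨d, rfl⟩ : ∃ d, n = m + 1 + d := ⟨n - (m+1), by omega⟩
      rw [if_pos (by omega), if_pos (by omega), if_pos (by omega), if_pos (by omega)]
      rw [show m + 1 + d + 2 - (m + 1) = d + 2 from by omega,
        show m + 1 + d + 1 - (m + 1) = d + 1 from by omega,
        show m + 1 + d + 1 - m = d + 2 from by omega,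
        show m + 1 + d - (m + 1) = d from by omega,
        show m + 1 + d + 2 = (m + 1 + d + 1) + 1 from by omega]
      rw [prod_top α (by omega), prod_top α (by omega), prod_top α (by omega), prod_bot α (by omega : m + 1 ≤ m + 1 + d),
        show m + 1 + 1 = m + 2 from by omega]
      simp only [Nat.factorial_succ]
      push_cast
      field_simp
      ring
    · by_cases h2 : m = n
      · subst h2
        rw [if_pos (by omega), if_pos (by omega), if_pos (by omega), if_neg (by omega)]
        rw [show m + 2 - (m + 1) = 1 from by omega, show m + 1 - (m + 1) = 0 from by omega,
          show m + 1 - m = 1 from by omega]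
        rw [show m + 1 + 1 = m + 2 from by omega, Finset.Icc_self, Finset.prod_singleton,
          Finset.Icc_eq_empty (by omega : ¬ m + 2 ≤ m + 1), Finset.prod_empty,
          prod_bot α (le_refl (m+1)), Finset.Icc_eq_empty (by omega : ¬ m + 1 + 1 ≤ m + 1),
          Finset.prod_empty]
        simp only [Nat.factorial_succ, Nat.factorial_zero, Nat.factorial_one]
        push_cast
        field_simp
        ring
      · by_cases h3 : m = n + 1
        · subst h3
          rw [if_pos (by omega), if_neg (by omega), if_pos (by omega), if_neg (by omega)]
          rw [show n + 2 - (n + 1 + 1) = 0 from by omega, show n + 1 - (n + 1) = 0 from by omega]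
          rw [Finset.Icc_eq_empty (by omega : ¬ n + 1 + 1 + 1 ≤ n + 2), Finset.prod_empty,
            Finset.Icc_eq_empty (by omega : ¬ n + 1 + 1 ≤ n + 1), Finset.prod_empty]
          simp only [Nat.factorial_succ, Nat.factorial_zero]
          push_cast
          field_simp
          ring
        · rw [if_neg (by omega), if_neg (by omega), if_neg (by omega), if_neg (by omega)]
          ring

theorem laguerre_mixed_recurrence_deg_succ_param_two (α : ℝ) (n : ℕ) :
    Polynomial.X ^ 2 * laguerre (α + 2) (n + 1) =
      (Polynomial.X ^ 2 - Polynomial.C (2 * (n : ℝ) + 2) * Polynomial.X -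
          Polynomial.C (((n : ℝ) + 1) * (α + 1))) * laguerre α (n + 1) +
        (Polynomial.X + Polynomial.C (α + 1)) * Polynomial.C (α + (n : ℝ) + 1) *
          laguerre α n := by
  have h1 := lemA (α+1) (n+1)
  rw [show α + 1 + 1 = α + 2 from by ring] at h1
  have h2 := lemA α (n+1)
  have h3 := lemA α (n+2)
  have h4 := lemR α n
  have h5 := lemR α (n+1)
  linear_combination (norm := (push_cast [map_add, map_mul, map_one, map_ofNat]; ring1))
    X * h1 + C ((n:ℝ) + α + 3) * h2 - C ((n:ℝ) + 2) * h3 - (X + C (α + 1)) * h4 +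
      C ((n:ℝ) + 2) * h5
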